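/- Let C ⊆ {0,1}ⁿ be a neural code and U = {U_1,…,U_n} open subsets of a topological space X with C = C(U). If ∏_{i∈τ}(1 − x_i) ∈ CF(J_C) for some τ ⊆ {1,…,n}, then X ⊆ ⋃_{i∈τ} U_i, while X ⊄ ⋃_{i∈γ} U_i for every proper subset γ ⊊ τ. -/

import Mathlib

open MvPolynomial

/-- The characteristic polynomial `ρ_v = ∏ i, (1 - v_i - x_i)` of a word `v ∈ {0,1}ⁿ = 𝔽₂ⁿ`. -/
noncomputable def rho (n : ℕ) (v : Fin n → ZMod 2) : MvPolynomial (Fin n) (ZMod 2) :=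
  ∏ i, (1 - C (v i) - X i)

/-- The neural ideal `J_C = ⟨ρ_v : v ∉ C⟩` of a neural code `C ⊆ {0,1}ⁿ`. -/
noncomputable def neuralIdeal (n : ℕ) (Co : Set (Fin n → ZMod 2)) :
    Ideal (MvPolynomial (Fin n) (ZMod 2)) :=
  Ideal.span { p | ∃ v, v ∉ Co ∧ p = rho n v }

/-- A pseudo-monomial: `∏_{i∈σ} x_i ∏_{j∈τ} (1 - x_j)` with `σ, τ` disjoint. -/
def IsPseudoMonomial (n : ℕ) (f : MvPolynomial (Fin n) (ZMod 2)) : Prop :=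
  ∃ σ τ : Finset (Fin n), Disjoint σ τ ∧
    f = (∏ i ∈ σ, X i) * ∏ j ∈ τ, (1 - X j)

/-- `f` is a minimal pseudo-monomial of the ideal `J`. -/
def IsMinimalPM (n : ℕ) (J : Ideal (MvPolynomial (Fin n) (ZMod 2)))
    (f : MvPolynomial (Fin n) (ZMod 2)) : Prop :=
  f ∈ J ∧ IsPseudoMonomial n f ∧
    ¬ ∃ g, IsPseudoMonomial n g ∧ g ∈ J ∧ g.totalDegree < f.totalDegree ∧
      ∃ h, f = g * h

/-- The canonical form `CF(J)`: the set of all minimal pseudo-monomials of `J`. -/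
def CF (n : ℕ) (J : Ideal (MvPolynomial (Fin n) (ZMod 2))) :
    Set (MvPolynomial (Fin n) (ZMod 2)) :=
  { f | IsMinimalPM n J f }

/-- An ideal is a pseudo-monomial ideal if it is generated by finitely many pseudo-monomials. -/
def IsPseudoMonomialIdeal (n : ℕ) (J : Ideal (MvPolynomial (Fin n) (ZMod 2))) : Prop :=
  ∃ S : Finset (MvPolynomial (Fin n) (ZMod 2)),
    (∀ f ∈ S, IsPseudoMonomial n f) ∧ J = Ideal.span (S : Set (MvPolynomial (Fin n) (ZMod 2)))

/-- A polynomial is square-free if every variable occurs with exponent at most 1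
in every monomial of its support. -/
def IsSquareFreePoly (n : ℕ) (f : MvPolynomial (Fin n) (ZMod 2)) : Prop :=
  ∀ m ∈ f.support, ∀ i, m i ≤ 1

/-- The Boolean ideal `B = ⟨x_i (1 - x_i) : 1 ≤ i ≤ n⟩`. -/
noncomputable def boolIdeal (n : ℕ) : Ideal (MvPolynomial (Fin n) (ZMod 2)) :=
  Ideal.span { p | ∃ i : Fin n, p = X i * (1 - X i) }

/-- The square-free representative `h_R` of `h` modulo the Boolean ideal:
replace every exponent by its truncation at 1. -/
noncomputable def sqReduce (n : ℕ) (h : MvPolynomial (Fin n) (ZMod 2)) :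
    MvPolynomial (Fin n) (ZMod 2) :=
  ∑ m ∈ h.support,
    monomial (Finsupp.mapRange (fun e => min e 1) (by simp) m) (coeff m h)

/-- The set of reduced products `P(C,D) = {(f g)_R : f ∈ CF(J_C), g ∈ CF(J_D)}`. -/
def reducedProducts (n : ℕ) (Co D : Set (Fin n → ZMod 2)) :
    Set (MvPolynomial (Fin n) (ZMod 2)) :=
  { p | ∃ f ∈ CF n (neuralIdeal n Co), ∃ g ∈ CF n (neuralIdeal n D), p = sqReduce n (f * g) }

/-- The set of minimal reduced products `MP(C,D)`. -/
def minReducedProducts (n : ℕ) (Co D : Set (Fin n → ZMod 2)) :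
    Set (MvPolynomial (Fin n) (ZMod 2)) :=
  { h | h ∈ reducedProducts n Co D ∧ h ≠ 0 ∧
    ¬ ∃ f ∈ reducedProducts n Co D, ∃ g : MvPolynomial (Fin n) (ZMod 2),
      1 ≤ g.totalDegree ∧ h = f * g }

/-- The code `C(U)` of a cover `U = {U_1, …, U_n}` of a topological space `X`. -/
def codeOfCover {X : Type*} [TopologicalSpace X] (n : ℕ) (U : Fin n → Set X) :
    Set (Fin n → ZMod 2) :=
  { v | ((⋂ i ∈ { i : Fin n | v i = 1 }, U i) \ ⋃ j ∈ { j : Fin n | v j = 0 }, U j).Nonempty }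
section Stmt5Aux
open Finset

variable {n : ℕ}

private lemma zmod2_factor (a b : ZMod 2) (h : a ≠ b) : 1 - a - b = 0 := by
  revert h; revert a b; decide

/-- Evaluating `rho n v` at `w ≠ v` gives zero. -/
private lemma eval_rho_eq_zero {v w : Fin n → ZMod 2} (hne : v ≠ w) :
    eval w (rho n v) = 0 := by
  obtain ⟨i, hi⟩ := Function.ne_iff.mp hne
  rw [rho, map_prod]
  refine Finset.prod_eq_zero (Finset.mem_univ i) ?_
  simp only [map_sub, map_one, eval_C, eval_X]
  exact zmod2_factor _ _ hi

/-- Polynomials in the neural ideal vanish on the code. -/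
private lemma eval_eq_zero_of_mem_neuralIdeal {Co : Set (Fin n → ZMod 2)}
    {p : MvPolynomial (Fin n) (ZMod 2)} (hp : p ∈ neuralIdeal n Co)
    {v : Fin n → ZMod 2} (hv : v ∈ Co) : eval v p = 0 := by
  induction hp using Submodule.span_induction with
  | mem x hx =>
      obtain ⟨w, hw, rfl⟩ := hx
      exact eval_rho_eq_zero (fun h => hw (h ▸ hv))
  | zero => simp
  | add x y hx hy ihx ihy => rw [map_add, ihx, ihy, add_zero]
  | smul a x hx ih => rw [smul_eq_mul, map_mul, ih, mul_zero]

private lemma one_sub_X_eq (i : Fin n) :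
    (1 - X i : MvPolynomial (Fin n) (ZMod 2)) = X i + 1 := by
  rw [sub_eq_add_neg, CharTwo.neg_eq, add_comm]

/-- Expansion of `∏ (1 - X i)` as a sum of square-free monomials. -/
private lemma prod_expand (τ : Finset (Fin n)) :
    (∏ i ∈ τ, (1 - X i : MvPolynomial (Fin n) (ZMod 2))) =
      ∑ s ∈ τ.powerset, monomial (∑ i ∈ s, Finsupp.single i 1) (1 : ZMod 2) := by
  simp_rw [one_sub_X_eq]
  rw [Finset.prod_add]
  refine Finset.sum_congr rfl fun s _ => ?_
  rw [Finset.prod_const_one, mul_one, monomial_sum_one]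
  exact Finset.prod_congr rfl fun i _ => rfl

private lemma msum_apply (s : Finset (Fin n)) (j : Fin n) :
    (∑ i ∈ s, Finsupp.single i 1 : Fin n →₀ ℕ) j = if j ∈ s then 1 else 0 := by
  rw [Finset.sum_apply']
  simp [Finsupp.single_apply]

private lemma msum_inj {s t : Finset (Fin n)}
    (h : (∑ i ∈ s, Finsupp.single i 1 : Fin n →₀ ℕ) = ∑ i ∈ t, Finsupp.single i 1) :
    s = t := by
  ext j
  have := congrArg (fun m : Fin n →₀ ℕ => m j) h
  simp only [msum_apply] at this
  by_cases hjs : j ∈ s <;> by_cases hjt : j ∈ t <;> simp_all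

private lemma msum_degree (s : Finset (Fin n)) :
    (∑ i ∈ s, Finsupp.single i 1 : Fin n →₀ ℕ).sum (fun _ e => e) = s.card := by
  rw [← Finsupp.sum_finsetSum_index (fun _ => rfl) (fun _ _ _ => rfl)]
  simp [Finsupp.sum_single_index]

/-- The total degree of `∏_{i ∈ τ} (1 - X i)` is `|τ|`. -/
private lemma totalDegree_prod_one_sub_X (τ : Finset (Fin n)) :
    (∏ i ∈ τ, (1 - X i : MvPolynomial (Fin n) (ZMod 2))).totalDegree = τ.card := by
  apply le_antisymm
  · refine (totalDegree_finset_prod _ _).trans ?_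
    calc ∑ i ∈ τ, (1 - X i : MvPolynomial (Fin n) (ZMod 2)).totalDegree
        ≤ ∑ _i ∈ τ, 1 := by
          refine Finset.sum_le_sum fun i _ => ?_
          rw [one_sub_X_eq]
          refine (totalDegree_add _ _).trans ?_
          simp [totalDegree_X]
      _ = τ.card := by simp
  · have hmem : (∑ i ∈ τ, Finsupp.single i 1 : Fin n →₀ ℕ) ∈
        (∏ i ∈ τ, (1 - X i : MvPolynomial (Fin n) (ZMod 2))).support := by
      rw [mem_support_iff, prod_expand, coeff_sum]
      have : ∀ s ∈ τ.powerset,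
          coeff (∑ i ∈ τ, Finsupp.single i 1)
            (monomial (∑ i ∈ s, Finsupp.single i 1) (1 : ZMod 2)) =
          if s = τ then 1 else 0 := by
        intro s _
        rw [coeff_monomial]
        by_cases hst : s = τ
        · simp [hst]
        · rw [if_neg hst, if_neg (fun h => hst (msum_inj h))]
      rw [Finset.sum_congr rfl this, Finset.sum_ite_eq' τ.powerset τ (fun _ => (1 : ZMod 2))]
      simp
    have := le_totalDegree hmem
    rwa [msum_degree] at this

/-- If the `U i`, `i ∈ γ`, cover the space, then `∏_{i∈γ}(1 - X i)` lies in the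
neural ideal of the code of the cover. -/
private lemma prod_mem_neuralIdeal {Ω : Type*} [TopologicalSpace Ω] (U : Fin n → Set Ω)
    (γ : Finset (Fin n)) (hcov : Set.univ ⊆ ⋃ i ∈ γ, U i) :
    (∏ i ∈ γ, (1 - X i : MvPolynomial (Fin n) (ZMod 2))) ∈
      neuralIdeal n (codeOfCover n U) := by
  classical
  have key : (∏ i ∈ γ, (1 - X i : MvPolynomial (Fin n) (ZMod 2))) =
      ∑ v ∈ Fintype.piFinset
          (fun i => if i ∈ γ then ({0} : Finset (ZMod 2)) else Finset.univ), rho n v := by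
    have e := Finset.prod_univ_sum
      (fun i => if i ∈ γ then ({0} : Finset (ZMod 2)) else Finset.univ)
      (fun i j => (1 - C j - X i : MvPolynomial (Fin n) (ZMod 2)))
    rw [show (∑ v ∈ Fintype.piFinset
          (fun i => if i ∈ γ then ({0} : Finset (ZMod 2)) else Finset.univ), rho n v)
        = ∑ v ∈ Fintype.piFinset
          (fun i => if i ∈ γ then ({0} : Finset (ZMod 2)) else Finset.univ),
            ∏ i, (1 - C (v i) - X i) from rfl,
        ← e]
    have : ∀ i : Fin n,
        (∑ j ∈ (if i ∈ γ then ({0} : Finset (ZMod 2)) else Finset.univ),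
          (1 - C j - X i : MvPolynomial (Fin n) (ZMod 2)))
        = if i ∈ γ then (1 - X i) else 1 := by
      intro i
      by_cases hi : i ∈ γ
      · simp [hi]
      · rw [if_neg hi, if_neg hi,
          show (Finset.univ : Finset (ZMod 2)) = {0, 1} by decide,
          Finset.sum_pair (by decide : (0 : ZMod 2) ≠ 1)]
        simp only [map_zero, map_one, sub_zero]
        ring_nf
        rw [show (2 : MvPolynomial (Fin n) (ZMod 2)) = 0 from CharTwo.two_eq_zero]
        ring
    rw [Finset.prod_congr rfl fun i _ => this i, Finset.prod_ite_mem,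
      Finset.univ_inter]
  rw [key]
  refine Ideal.sum_mem _ fun v hv => Ideal.subset_span ⟨v, ?_, rfl⟩
  intro hvC
  obtain ⟨x, hx1, hx2⟩ := hvC
  obtain ⟨_, ⟨i, rfl⟩, _, ⟨hiγ, rfl⟩, hxU⟩ := hcov (Set.mem_univ x)
  have hv0 : v i = 0 := by
    have := Fintype.mem_piFinset.mp hv i
    rw [if_pos hiγ] at this
    simpa using this
  exact hx2 (Set.mem_biUnion (by simpa [Set.mem_setOf_eq] using hv0) hxU)

end Stmt5Aux

/-- Type 3 relations. -/
theorem stmt5 (n : ℕ) (hn : 1 ≤ n) {Ω : Type*} [TopologicalSpace Ω]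
    (U : Fin n → Set Ω) (Co : Set (Fin n → ZMod 2)) (hCo : Co = codeOfCover n U)
    (τ : Finset (Fin n)) (h : (∏ i ∈ τ, (1 - X i)) ∈ CF n (neuralIdeal n Co)) :
    Set.univ ⊆ (⋃ i ∈ τ, U i) ∧ ∀ γ ⊂ τ, ¬ Set.univ ⊆ ⋃ i ∈ γ, U i := by
  classical
  have hcov : Set.univ ⊆ ⋃ i ∈ τ, U i := by
    intro x _
    by_contra hx
    set v : Fin n → ZMod 2 := fun i => if x ∈ U i then 1 else 0 with hv
    have hvC : v ∈ Co := by
      rw [hCo]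
      refine ⟨x, ?_, ?_⟩
      · simp only [Set.mem_iInter, Set.mem_setOf_eq]
        intro i hi
        by_contra hxi
        simp [hv, hxi] at hi
      · intro hxj
        simp only [Set.mem_iUnion, Set.mem_setOf_eq] at hxj
        obtain ⟨j, hj0, hxj⟩ := hxj
        simp [hv, hxj] at hj0
    have h0 : eval v (∏ i ∈ τ, (1 - X i : MvPolynomial (Fin n) (ZMod 2))) = 0 :=
      eval_eq_zero_of_mem_neuralIdeal h.1 hvC
    rw [map_prod] at h0
    have h1 : ∀ i ∈ τ, eval v (1 - X i : MvPolynomial (Fin n) (ZMod 2)) = 1 := by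
      intro i hi
      have hxi : x ∉ U i := fun hxi => hx (Set.mem_biUnion hi hxi)
      simp [hv, hxi]
    rw [Finset.prod_congr rfl h1, Finset.prod_const_one] at h0
    exact one_ne_zero h0
  refine ⟨hcov, fun γ hγ hcovγ => ?_⟩
  have hg : (∏ i ∈ γ, (1 - X i : MvPolynomial (Fin n) (ZMod 2))) ∈ neuralIdeal n Co := by
    rw [hCo]; exact prod_mem_neuralIdeal U γ hcovγ
  refine h.2.2 ⟨∏ i ∈ γ, (1 - X i), ⟨∅, γ, Finset.disjoint_empty_left γ, by simp⟩, hg, ?_, ?_⟩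
  · rw [totalDegree_prod_one_sub_X, totalDegree_prod_one_sub_X]
    exact Finset.card_lt_card hγ
  · exact ⟨∏ i ∈ τ \ γ, (1 - X i), by rw [← Finset.prod_sdiff hγ.subset, mul_comm]⟩
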